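/- Let P, Q : ℝ × ℝ → ℝ be continuously differentiable on all of ℝ × ℝ and satisfy, at every point, the relations ∂P/∂x = ∂Q/∂y and ∂Q/∂x = ∂P/∂y. Then there exist differentiable functions F, G : ℝ × ℝ → ℝ such that at every point ∂F/∂x = P, ∂F/∂y = Q, ∂G/∂x = Q, and ∂G/∂y = P. Consequently both 1-forms P dx + Q dy and Q dx + P dy are exact, so the integral ∫ f(u) du = ∫ (P dx + Q dy) + δ(Q dx + P dy) of the twocomplex function f = P + δQ between two points is independent of the path connecting the points. -/

import Mathlib

open intervalIntegral

/-- A function on ℝ×ℝ whose directional derivative along `v` vanishes everywhere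
is constant along lines in direction `v`. -/
lemma const_along (A : ℝ × ℝ → ℝ) (hA : Differentiable ℝ A) (v : ℝ × ℝ)
    (h0 : ∀ p, fderiv ℝ A p v = 0) (p : ℝ × ℝ) (t : ℝ) :
    A (p + t • v) = A p := by
  have hc : ∀ s : ℝ, HasDerivAt (fun s : ℝ => p + s • v) v s := by
    intro s
    simpa using ((hasDerivAt_id s).smul_const v).const_add p
  have hφ : ∀ s : ℝ, HasDerivAt (fun s : ℝ => A (p + s • v)) 0 s := by
    intro s
    have := (hA (p + s • v)).hasFDerivAt.comp_hasDerivAt s (hc s)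
    simp only [h0] at this
    exact this
  have hconst := is_const_of_deriv_eq_zero (f := fun s : ℝ => A (p + s • v))
    (fun s => (hφ s).differentiableAt) (fun s => (hφ s).deriv) t 0
  simpa using hconst

/-- If P, Q are C¹ on ℝ × ℝ and satisfy ∂P/∂x = ∂Q/∂y and ∂Q/∂x = ∂P/∂y
everywhere, then the 1-forms P dx + Q dy and Q dx + P dy are exact: there are
differentiable potentials F, G with ∂F/∂x = P, ∂F/∂y = Q, ∂G/∂x = Q,
∂G/∂y = P, so the twocomplex integral is path independent. -/
theorem twocomplex_path_independence (P Q : ℝ × ℝ → ℝ)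
    (hP : ContDiff ℝ 1 P) (hQ : ContDiff ℝ 1 Q)
    (hCR1 : ∀ p : ℝ × ℝ, fderiv ℝ P p (1, 0) = fderiv ℝ Q p (0, 1))
    (hCR2 : ∀ p : ℝ × ℝ, fderiv ℝ Q p (1, 0) = fderiv ℝ P p (0, 1)) :
    ∃ F G : ℝ × ℝ → ℝ, Differentiable ℝ F ∧ Differentiable ℝ G ∧
      ∀ p : ℝ × ℝ,
        fderiv ℝ F p (1, 0) = P p ∧ fderiv ℝ F p (0, 1) = Q p ∧
        fderiv ℝ G p (1, 0) = Q p ∧ fderiv ℝ G p (0, 1) = P p := by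
  have hPd : Differentiable ℝ P := hP.differentiable one_ne_zero
  have hQd : Differentiable ℝ Q := hQ.differentiable one_ne_zero
  set A : ℝ × ℝ → ℝ := fun p => P p + Q p with hAdef
  set B : ℝ × ℝ → ℝ := fun p => P p - Q p with hBdef
  have hAd : Differentiable ℝ A := hPd.add hQd
  have hBd : Differentiable ℝ B := hPd.sub hQd
  -- directional derivatives vanish
  have hAdir : ∀ p, fderiv ℝ A p ((1 : ℝ), (-1 : ℝ)) = 0 := by
    intro p
    have hA' : fderiv ℝ A p = fderiv ℝ P p + fderiv ℝ Q p := fderiv_add (hPd p) (hQd p)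
    have hv : ((1 : ℝ), (-1 : ℝ)) = ((1 : ℝ), (0 : ℝ)) - ((0 : ℝ), (1 : ℝ)) := by
      simp [Prod.ext_iff]
    rw [hA', hv]
    simp only [ContinuousLinearMap.add_apply, map_sub]
    rw [hCR1 p, hCR2 p]; ring
  have hBdir : ∀ p, fderiv ℝ B p ((1 : ℝ), (1 : ℝ)) = 0 := by
    intro p
    have hB' : fderiv ℝ B p = fderiv ℝ P p - fderiv ℝ Q p := fderiv_sub (hPd p) (hQd p)
    have hv : ((1 : ℝ), (1 : ℝ)) = ((1 : ℝ), (0 : ℝ)) + ((0 : ℝ), (1 : ℝ)) := by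
      simp [Prod.ext_iff]
    rw [hB', hv]
    simp only [ContinuousLinearMap.sub_apply, map_add]
    rw [hCR1 p, hCR2 p]; ring
  -- A depends only on x+y, B only on x-y
  set a : ℝ → ℝ := fun s => A (s, 0) with hadef
  set b : ℝ → ℝ := fun s => B (s, 0) with hbdef
  have hAa : ∀ p : ℝ × ℝ, A p = a (p.1 + p.2) := by
    intro p
    have := const_along A hAd ((1 : ℝ), (-1 : ℝ)) hAdir p p.2
    have h : p + p.2 • ((1 : ℝ), (-1 : ℝ)) = (p.1 + p.2, 0) := by
      simp [Prod.ext_iff]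
    rw [h] at this
    exact this.symm
  have hBb : ∀ p : ℝ × ℝ, B p = b (p.1 - p.2) := by
    intro p
    have := const_along B hBd ((1 : ℝ), (1 : ℝ)) hBdir p (-p.2)
    have h : p + (-p.2) • ((1 : ℝ), (1 : ℝ)) = (p.1 - p.2, 0) := by
      simp [Prod.ext_iff]; ring
    rw [h] at this
    exact this.symm
  have hacont : Continuous fun s : ℝ => a s / 2 :=
    ((hAd.continuous.comp (continuous_id.prodMk continuous_const)).div_const 2)
  have hbcont : Continuous fun s : ℝ => b s / 2 :=
    ((hBd.continuous.comp (continuous_id.prodMk continuous_const)).div_const 2)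
  set f : ℝ → ℝ := fun s => ∫ t in (0:ℝ)..s, a t / 2 with hfdef
  set g : ℝ → ℝ := fun s => ∫ t in (0:ℝ)..s, b t / 2 with hgdef
  have hf : ∀ s : ℝ, HasDerivAt f (a s / 2) s := fun s =>
    (hacont.integral_hasStrictDerivAt 0 s).hasDerivAt
  have hg : ∀ s : ℝ, HasDerivAt g (b s / 2) s := fun s =>
    (hbcont.integral_hasStrictDerivAt 0 s).hasDerivAt
  -- linear maps
  set L : (ℝ × ℝ) →L[ℝ] ℝ := ContinuousLinearMap.fst ℝ ℝ ℝ + ContinuousLinearMap.snd ℝ ℝ ℝ with hLdef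
  set M : (ℝ × ℝ) →L[ℝ] ℝ := ContinuousLinearMap.fst ℝ ℝ ℝ - ContinuousLinearMap.snd ℝ ℝ ℝ with hMdef
  have hLd : ∀ p : ℝ × ℝ, HasFDerivAt (fun q : ℝ × ℝ => q.1 + q.2) L p := fun p => L.hasFDerivAt
  have hMd : ∀ p : ℝ × ℝ, HasFDerivAt (fun q : ℝ × ℝ => q.1 - q.2) M p := fun p => M.hasFDerivAt
  -- the potentials
  have hF : ∀ p : ℝ × ℝ, HasFDerivAt (fun p : ℝ × ℝ => f (p.1 + p.2) + g (p.1 - p.2))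
      ((a (p.1 + p.2) / 2) • L + (b (p.1 - p.2) / 2) • M) p := by
    intro p
    exact ((hf (p.1 + p.2)).comp_hasFDerivAt p (hLd p)).add
      ((hg (p.1 - p.2)).comp_hasFDerivAt p (hMd p))
  have hG : ∀ p : ℝ × ℝ, HasFDerivAt (fun p : ℝ × ℝ => f (p.1 + p.2) - g (p.1 - p.2))
      ((a (p.1 + p.2) / 2) • L - (b (p.1 - p.2) / 2) • M) p := by
    intro p
    exact ((hf (p.1 + p.2)).comp_hasFDerivAt p (hLd p)).sub
      ((hg (p.1 - p.2)).comp_hasFDerivAt p (hMd p))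
  refine ⟨fun p => f (p.1 + p.2) + g (p.1 - p.2), fun p => f (p.1 + p.2) - g (p.1 - p.2),
    fun p => (hF p).differentiableAt, fun p => (hG p).differentiableAt, fun p => ?_⟩
  have haA : a (p.1 + p.2) = P p + Q p := (hAa p).symm
  have hbB : b (p.1 - p.2) = P p - Q p := (hBb p).symm
  have hFe := (hF p).fderiv
  have hGe := (hG p).fderiv
  rw [hFe, hGe]
  simp only [ContinuousLinearMap.add_apply, ContinuousLinearMap.sub_apply,
    ContinuousLinearMap.smul_apply, hLdef, hMdef, ContinuousLinearMap.coe_fst',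
    ContinuousLinearMap.coe_snd', haA, hbB, smul_eq_mul]
  refine ⟨?_, ?_, ?_, ?_⟩ <;> ring
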